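/- Let p be a prime and suppose \omega(t) = \sum_{n\ge 1} b_n t^{n-1} dt with b_n \in Z_p, and t(q) = \sum_{n \ge 1} A_n q^n with A_n \in Z_p, and write \omega(t(q)) = \sum_{n \ge 1} c_n q^{n-1} dq. Suppose there exist \alpha_p, \beta_p \in Z_p with p | \beta_p such that b_{mp^r} - \alpha_p b_{mp^{r-1}} + \beta_p b_{mp^{r-2}} \equiv 0 \pmod{p^r} for all positive integers m and r. Then c_{mp^r} - \alpha_p c_{mp^{r-1}} + \beta_p c_{mp^{r-2}} \equiv 0 \pmod{p^r} for all positive integers m and r. -/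

import Mathlib

/-- Extension of a sequence of `p`-adic integers to rational indices: indices that are not
positive integers give `0`. -/
noncomputable def extSeq {p : ℕ} [Fact p.Prime] (u : ℕ → ℤ_[p]) (x : ℚ) : ℤ_[p] :=
  if 0 < x ∧ x.den = 1 then u x.num.toNat else 0

/-- The power series `t(q) = ∑_{n ≥ 1} A_n qⁿ` built from the coefficients `A`. -/
noncomputable def tSeries {p : ℕ} [Fact p.Prime] (A : ℕ → ℤ_[p]) : PowerSeries ℤ_[p] :=
  PowerSeries.mk fun n => if n = 0 then 0 else A n


open PowerSeries Finset

section Expand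

variable {R : Type*} [CommRing R]

/-- Formal substitution `q ↦ q^p` in a power series. -/
noncomputable def expandPS (p : ℕ) (f : PowerSeries R) : PowerSeries R :=
  PowerSeries.mk fun N => if p ∣ N then PowerSeries.coeff (N / p) f else 0

@[simp] lemma coeff_expandPS (p N : ℕ) (f : PowerSeries R) :
    PowerSeries.coeff N (expandPS p f) =
      if p ∣ N then PowerSeries.coeff (N / p) f else 0 := by
  simp [expandPS]

lemma expandPS_mul {p : ℕ} (hp : 0 < p) (f g : PowerSeries R) :
    expandPS p (f * g) = expandPS p f * expandPS p g := by
  ext N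
  rw [coeff_expandPS, PowerSeries.coeff_mul (φ := expandPS p f)]
  by_cases hN : p ∣ N
  · obtain ⟨M, rfl⟩ := hN
    rw [if_pos ⟨M, rfl⟩, Nat.mul_div_cancel_left _ hp, PowerSeries.coeff_mul]
    rw [← Finset.sum_filter_add_sum_filter_not (Finset.HasAntidiagonal.antidiagonal (p * M))
      (fun x => p ∣ x.1)]
    have h2 : ∑ x ∈ (Finset.HasAntidiagonal.antidiagonal (p * M)).filter (fun x => ¬ p ∣ x.1),
        PowerSeries.coeff x.1 (expandPS p f) * PowerSeries.coeff x.2 (expandPS p g) = 0 := by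
      apply Finset.sum_eq_zero
      intro x hx
      rw [Finset.mem_filter] at hx
      rw [coeff_expandPS, if_neg hx.2, zero_mul]
    rw [h2, add_zero]
    refine Finset.sum_nbij' (fun y => (p * y.1, p * y.2)) (fun x => (x.1 / p, x.2 / p)) ?_ ?_ ?_ ?_ ?_
    · intro y hy
      rw [Finset.HasAntidiagonal.mem_antidiagonal] at hy
      rw [Finset.mem_filter, Finset.HasAntidiagonal.mem_antidiagonal]
      exact ⟨by rw [← Nat.mul_add, hy], ⟨y.1, rfl⟩⟩
    · intro x hx
      rw [Finset.mem_filter, Finset.HasAntidiagonal.mem_antidiagonal] at hx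
      obtain ⟨hsum, ⟨a, ha⟩⟩ := hx
      have hb : p ∣ x.2 := by
        have : x.2 = p * M - p * a := by omega
        exact this ▸ Nat.dvd_sub ⟨M, rfl⟩ ⟨a, rfl⟩
      obtain ⟨bb, hbb⟩ := hb
      rw [Finset.HasAntidiagonal.mem_antidiagonal]
      rw [ha, hbb] at hsum
      simp only [ha, hbb, Nat.mul_div_cancel_left _ hp]
      exact Nat.eq_of_mul_eq_mul_left hp (by rw [Nat.mul_add]; exact hsum)
    · intro y hy
      simp [Nat.mul_div_cancel_left _ hp]
    · intro x hx
      rw [Finset.mem_filter, Finset.HasAntidiagonal.mem_antidiagonal] at hx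
      obtain ⟨hsum, ⟨a, ha⟩⟩ := hx
      have hb : p ∣ x.2 := by
        have : x.2 = p * M - p * a := by omega
        exact this ▸ Nat.dvd_sub ⟨M, rfl⟩ ⟨a, rfl⟩
      obtain ⟨bb, hbb⟩ := hb
      have : x = (p * a, p * bb) := by rw [← ha, ← hbb]
      simp [this, Nat.mul_div_cancel_left _ hp]
    · intro y hy
      rw [coeff_expandPS, coeff_expandPS, if_pos ⟨y.1, rfl⟩, if_pos ⟨y.2, rfl⟩,
        Nat.mul_div_cancel_left _ hp, Nat.mul_div_cancel_left _ hp]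
  · rw [if_neg hN]
    symm
    apply Finset.sum_eq_zero
    intro x hx
    rw [Finset.HasAntidiagonal.mem_antidiagonal] at hx
    by_cases h1 : p ∣ x.1
    · have h2 : ¬ p ∣ x.2 := fun h2 => hN (hx ▸ Nat.dvd_add h1 h2)
      rw [coeff_expandPS (p := p) (N := x.2), if_neg h2, mul_zero]
    · rw [coeff_expandPS (p := p) (N := x.1), if_neg h1, zero_mul]

lemma expandPS_one {p : ℕ} (hp : 0 < p) : expandPS p (1 : PowerSeries R) = 1 := by
  ext N
  rw [coeff_expandPS]
  by_cases hN : N = 0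
  · subst hN; simp
  · by_cases h : p ∣ N
    · have : N / p ≠ 0 := by
        obtain ⟨a, rfl⟩ := h
        rw [Nat.mul_div_cancel_left _ hp]
        rintro rfl; simp at hN
      rw [if_pos h, PowerSeries.coeff_one, PowerSeries.coeff_one, if_neg this, if_neg hN]
    · rw [if_neg h, PowerSeries.coeff_one, if_neg hN]

lemma expandPS_pow {p : ℕ} (hp : 0 < p) (f : PowerSeries R) (n : ℕ) :
    expandPS p (f ^ n) = (expandPS p f) ^ n := by
  induction n with
  | zero => simpa using expandPS_one (R := R) hp
  | succ n ih => rw [pow_succ, pow_succ, expandPS_mul hp, ih]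

lemma coeff_pow_congr {N n : ℕ} {f g : PowerSeries R}
    (h : ∀ i ≤ N, PowerSeries.coeff i f = PowerSeries.coeff i g) :
    PowerSeries.coeff N (f ^ n) = PowerSeries.coeff N (g ^ n) := by
  have hd : (X : PowerSeries R) ^ (N + 1) ∣ f - g := by
    rw [PowerSeries.X_pow_dvd_iff]
    intro m hm
    rw [map_sub, h m (Nat.lt_succ_iff.mp hm), sub_self]
  have hd2 : (X : PowerSeries R) ^ (N + 1) ∣ f ^ n - g ^ n :=
    hd.trans (sub_dvd_pow_sub_pow f g n)
  have := PowerSeries.X_pow_dvd_iff.mp hd2 N (Nat.lt_succ_self N)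
  rw [map_sub, sub_eq_zero] at this
  exact this

lemma pow_p_eq_expandPS {p : ℕ} [Fact p.Prime] (f : PowerSeries (ZMod p)) :
    f ^ p = expandPS p f := by
  have hp : 0 < p := (Fact.out : p.Prime).pos
  ext N
  set P : Polynomial (ZMod p) := PowerSeries.trunc (N + 1) f with hP
  have h1 : PowerSeries.coeff N (f ^ p) =
      PowerSeries.coeff N ((P : PowerSeries (ZMod p)) ^ p) := by
    apply coeff_pow_congr
    intro i hi
    exact (coeff_coe_trunc_of_lt (Nat.lt_succ_of_le hi)).symm
  rw [h1, ← Polynomial.coe_pow, ← Polynomial.map_frobenius_expand p P, Polynomial.map_expand,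
    ZMod.frobenius_zmod, Polynomial.map_id, Polynomial.coeff_coe, Polynomial.coeff_expand hp,
    coeff_expandPS]
  by_cases h : p ∣ N
  · rw [if_pos h, if_pos h, hP, PowerSeries.coeff_trunc,
      if_pos (Nat.lt_succ_of_le (Nat.div_le_self N p))]
  · rw [if_neg h, if_neg h]

lemma map_expandPS {S : Type*} [CommRing S] (φ : R →+* S) (p : ℕ) (f : PowerSeries R) :
    PowerSeries.map φ (expandPS p f) = expandPS p (PowerSeries.map φ f) := by
  ext N
  simp [apply_ite φ]

end Expand


open PowerSeries Finset

section ZpLemmas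

variable {p : ℕ} [Fact p.Prime]

lemma PadicInt.dvd_iff_toZMod_eq_zero (z : ℤ_[p]) :
    (p : ℤ_[p]) ∣ z ↔ PadicInt.toZMod z = 0 := by
  rw [← RingHom.mem_ker, PadicInt.ker_toZMod, PadicInt.maximalIdeal_eq_span_p,
    Ideal.mem_span_singleton]

lemma PadicInt.isUnit_natCast_of_not_dvd {u : ℕ} (h : ¬ p ∣ u) : IsUnit (u : ℤ_[p]) := by
  by_contra hu
  rw [PadicInt.not_isUnit_iff] at hu
  have h2 : ‖((u : ℤ) : ℤ_[p])‖ < 1 := by exact_mod_cast hu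
  rw [PadicInt.norm_int_lt_one_iff_dvd] at h2
  exact h (by exact_mod_cast h2)

lemma natCast_eq_C (n : ℕ) : (n : PowerSeries ℤ_[p]) = PowerSeries.C (n : ℤ_[p]) :=
  (map_natCast (PowerSeries.C) n).symm

lemma dvd_series_of_forall_coeff_dvd {d : ℤ_[p]} {f : PowerSeries ℤ_[p]}
    (h : ∀ N, d ∣ PowerSeries.coeff N f) :
    PowerSeries.C d ∣ f := by
  refine ⟨PowerSeries.mk fun N => (h N).choose, ?_⟩
  ext N
  rw [PowerSeries.coeff_C_mul, PowerSeries.coeff_mk]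
  exact (h N).choose_spec

lemma coeff_dvd_of_dvd_series {d : ℤ_[p]} {f : PowerSeries ℤ_[p]}
    (h : PowerSeries.C d ∣ f) (N : ℕ) : d ∣ PowerSeries.coeff N f := by
  obtain ⟨g, rfl⟩ := h
  exact ⟨PowerSeries.coeff N g, PowerSeries.coeff_C_mul N g d⟩

/-- Frobenius congruence for power series over `ℤ_[p]`:  `s^p ≡ s(q^p) mod p`. -/
lemma pow_p_sub_expandPS_dvd (s : PowerSeries ℤ_[p]) :
    PowerSeries.C (p : ℤ_[p]) ∣ s ^ p - expandPS p s := by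
  apply dvd_series_of_forall_coeff_dvd
  intro N
  rw [PadicInt.dvd_iff_toZMod_eq_zero]
  have : PadicInt.toZMod (PowerSeries.coeff N (s ^ p - expandPS p s)) =
      PowerSeries.coeff N (PowerSeries.map PadicInt.toZMod (s ^ p - expandPS p s)) := by
    rw [PowerSeries.coeff_map]
  rw [this, map_sub, map_pow, map_expandPS, pow_p_eq_expandPS, sub_self, map_zero]

end ZpLemmas

section Dlemmas

variable {p : ℕ} [Fact p.Prime]

lemma D1 (s : PowerSeries ℤ_[p]) (k : ℕ) :
    PowerSeries.C ((p : ℤ_[p]) ^ (k.factorization p + 1)) ∣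
      (s ^ k) ^ p - expandPS p (s ^ k) := by
  have hp : 0 < p := (Fact.out : p.Prime).pos
  set e := k.factorization p with he
  set u := ordCompl[p] k with hu
  have hk' : p ^ e * u = k := Nat.ordProj_mul_ordCompl_eq_self k p
  have h1 : ((p : ℕ) : PowerSeries ℤ_[p]) ∣ (s ^ u) ^ p - expandPS p (s ^ u) := by
    rw [natCast_eq_C]; exact pow_p_sub_expandPS_dvd _
  have h2 := dvd_sub_pow_of_dvd_sub h1 e
  have e1 : ((s ^ u) ^ p) ^ p ^ e = (s ^ k) ^ p := by
    rw [← pow_mul, ← pow_mul, ← pow_mul, ← hk']; ring_nf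
  have e2 : (expandPS p (s ^ u)) ^ p ^ e = expandPS p (s ^ k) := by
    rw [← expandPS_pow hp, ← pow_mul, ← hk']; ring_nf
  rw [e1, e2] at h2
  rwa [natCast_eq_C, ← map_pow] at h2

lemma D2 (s : PowerSeries ℤ_[p]) (k : ℕ) :
    PowerSeries.C ((p : ℤ_[p]) ^ (k.factorization p + 1)) ∣
      (s ^ k) ^ (p ^ 2) - expandPS p (expandPS p (s ^ k)) := by
  have hp : 0 < p := (Fact.out : p.Prime).pos
  set e := k.factorization p with he
  set u := ordCompl[p] k with hu
  have hk' : p ^ e * u = k := Nat.ordProj_mul_ordCompl_eq_self k p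
  have h0 : ((p : ℕ) : PowerSeries ℤ_[p]) ∣ (s ^ u) ^ p - expandPS p (s ^ u) := by
    rw [natCast_eq_C]; exact pow_p_sub_expandPS_dvd _
  have h1 : ((p : ℕ) : PowerSeries ℤ_[p]) ∣
      (s ^ u) ^ (p ^ 2) - expandPS p (expandPS p (s ^ u)) := by
    have ha : (s ^ u) ^ (p ^ 2) - expandPS p (expandPS p (s ^ u)) =
        (((s ^ u) ^ p) ^ p - (expandPS p (s ^ u)) ^ p) +
          ((expandPS p (s ^ u)) ^ p - expandPS p (expandPS p (s ^ u))) := by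
      rw [← pow_mul, pow_two]; ring
    rw [ha]
    refine dvd_add (h0.trans (sub_dvd_pow_sub_pow _ _ p)) ?_
    rw [natCast_eq_C]; exact pow_p_sub_expandPS_dvd _
  have h2 := dvd_sub_pow_of_dvd_sub h1 e
  have e1 : ((s ^ u) ^ p ^ 2) ^ p ^ e = (s ^ k) ^ p ^ 2 := by
    rw [← pow_mul, ← pow_mul, ← pow_mul, ← hk']; ring_nf
  have e2 : (expandPS p (expandPS p (s ^ u))) ^ p ^ e =
      expandPS p (expandPS p (s ^ k)) := by
    rw [← expandPS_pow hp, ← expandPS_pow hp, ← pow_mul, ← hk']; ring_nf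
  rw [e1, e2] at h2
  rwa [natCast_eq_C, ← map_pow] at h2

end Dlemmas

section ExtSeq

variable {p : ℕ} [Fact p.Prime]

/-- The three-term combination `u N - α u_{N/p} + β u_{N/p²}` (missing terms are `0`). -/
noncomputable def seqComb (u : ℕ → ℤ_[p]) (α β : ℤ_[p]) (N : ℕ) : ℤ_[p] :=
  u N - α * (if p ∣ N then u (N / p) else 0) + β * (if p ^ 2 ∣ N then u (N / p ^ 2) else 0)

lemma extSeq_natCast (u : ℕ → ℤ_[p]) (n : ℕ) (hn : 0 < n) : extSeq u ((n : ℚ)) = u n := by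
  rw [extSeq, if_pos]
  · norm_num
  · refine ⟨by exact_mod_cast hn, Rat.den_natCast n⟩

lemma extSeq_eval_pos (u : ℕ → ℤ_[p]) (m r : ℕ) (hm : 0 < m) :
    extSeq u ((m : ℚ) * (p : ℚ) ^ (r : ℤ)) = u (m * p ^ r) := by
  have h : (m : ℚ) * (p : ℚ) ^ (r : ℤ) = ((m * p ^ r : ℕ) : ℚ) := by
    rw [zpow_natCast]; push_cast; ring
  rw [h, extSeq_natCast]
  have hp : 0 < p := (Fact.out : p.Prime).pos
  positivity

lemma extSeq_eval_neg_one (u : ℕ → ℤ_[p]) (m : ℕ) (hm : 0 < m) :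
    extSeq u ((m : ℚ) * (p : ℚ) ^ (-1 : ℤ)) = if p ∣ m then u (m / p) else 0 := by
  have hp : 0 < p := (Fact.out : p.Prime).pos
  have hpQ : (p : ℚ) ≠ 0 := by exact_mod_cast hp.ne'
  by_cases h : p ∣ m
  · obtain ⟨m', rfl⟩ := h
    have hm' : 0 < m' := by
      rcases Nat.eq_zero_or_pos m' with h0 | h0
      · subst h0; simp at hm
      · exact h0
    have hx : ((p * m' : ℕ) : ℚ) * (p : ℚ) ^ (-1 : ℤ) = ((m' : ℕ) : ℚ) := by
      rw [zpow_neg_one]; push_cast; field_simp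
    rw [hx, extSeq_natCast u m' hm', if_pos ⟨m', rfl⟩, Nat.mul_div_cancel_left _ hp]
  · rw [if_neg h, extSeq, if_neg]
    rintro ⟨hpos, hden⟩
    set x := (m : ℚ) * (p : ℚ) ^ (-1 : ℤ) with hxdef
    have hnum : ((x.num : ℚ)) = x := by
      rw [← Rat.num_div_den x, hden]; simp
    have h2 : (m : ℚ) = (x.num : ℚ) * p := by
      rw [hnum, hxdef, zpow_neg_one]; field_simp
    have h3 : (m : ℤ) = x.num * p := by exact_mod_cast h2
    have h4 : 0 < x.num := Rat.num_pos.mpr hpos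
    have h5 : (x.num.toNat : ℤ) * (p : ℤ) = (m : ℤ) := by
      rw [Int.toNat_of_nonneg h4.le]; exact h3.symm
    have h6 : x.num.toNat * p = m := by exact_mod_cast h5
    exact h ⟨x.num.toNat, by rw [← h6, Nat.mul_comm]⟩

lemma extSeq_comb (u : ℕ → ℤ_[p]) (α β : ℤ_[p]) (m r : ℕ) (hm : 0 < m) (hr : 0 < r) :
    extSeq u ((m : ℚ) * (p : ℚ) ^ (r : ℤ))
      - α * extSeq u ((m : ℚ) * (p : ℚ) ^ ((r : ℤ) - 1))
      + β * extSeq u ((m : ℚ) * (p : ℚ) ^ ((r : ℤ) - 2))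
    = seqComb u α β (m * p ^ r) := by
  have hp : 0 < p := (Fact.out : p.Prime).pos
  have hp1 : 1 < p := (Fact.out : p.Prime).one_lt
  have h1 : (r : ℤ) - 1 = ((r - 1 : ℕ) : ℤ) := by omega
  rcases Nat.lt_or_ge r 2 with hr2 | hr2
  · -- r = 1
    have hr1 : r = 1 := by omega
    subst hr1
    have e2 : ((1 : ℕ) : ℤ) - 2 = (-1 : ℤ) := by norm_num
    rw [h1, e2, extSeq_eval_pos u m 1 hm, extSeq_eval_pos u m (1 - 1) hm,
      extSeq_eval_neg_one u m hm]
    simp only [pow_one, Nat.sub_self, pow_zero, mul_one]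
    rw [seqComb, if_pos (dvd_mul_left p m), Nat.mul_div_cancel _ hp]
    have hiff : p ^ 2 ∣ m * p ↔ p ∣ m := by rw [pow_two]; exact Nat.mul_dvd_mul_iff_right hp
    by_cases hpm : p ∣ m
    · rw [if_pos (hiff.mpr hpm), if_pos hpm]
      obtain ⟨m', rfl⟩ := hpm
      rw [Nat.mul_div_cancel_left _ hp,
        Nat.div_eq_of_eq_mul_left (by positivity) (show p * m' * p = m' * p ^ 2 by ring)]
    · rw [if_neg (fun hc => hpm (hiff.mp hc)), if_neg hpm]
  · obtain ⟨s, rfl⟩ : ∃ s, r = s + 2 := ⟨r - 2, by omega⟩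
    have h2 : ((s + 2 : ℕ) : ℤ) - 2 = ((s : ℕ) : ℤ) := by omega
    have h1' : ((s + 2 : ℕ) : ℤ) - 1 = ((s + 1 : ℕ) : ℤ) := by omega
    rw [h1', h2, extSeq_eval_pos u m (s + 2) hm, extSeq_eval_pos u m (s + 1) hm,
      extSeq_eval_pos u m s hm]
    rw [seqComb]
    have hd1 : p ∣ m * p ^ (s + 2) := ⟨m * p ^ (s + 1), by ring⟩
    have hd2 : p ^ 2 ∣ m * p ^ (s + 2) := ⟨m * p ^ s, by ring⟩
    rw [if_pos hd1, if_pos hd2,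
      Nat.div_eq_of_eq_mul_left hp (show m * p ^ (s + 2) = m * p ^ (s + 1) * p by ring),
      Nat.div_eq_of_eq_mul_left (by positivity)
        (show m * p ^ (s + 2) = m * p ^ s * p ^ 2 by ring)]

end ExtSeq

section Sums

open PowerSeries

variable {p : ℕ} [Fact p.Prime]

lemma tSeries_constantCoeff (A : ℕ → ℤ_[p]) : constantCoeff (tSeries A) = 0 := by
  rw [← PowerSeries.coeff_zero_eq_constantCoeff, tSeries, PowerSeries.coeff_mk, if_pos rfl]

lemma coeff_tpow_mul_eq_zero (A : ℕ → ℤ_[p]) (g : PowerSeries ℤ_[p]) {j M : ℕ} (h : M < j) :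
    PowerSeries.coeff M ((tSeries A) ^ j * g) = 0 := by
  have hX : (X : PowerSeries ℤ_[p]) ^ j ∣ (tSeries A) ^ j * g :=
    Dvd.dvd.mul_right (pow_dvd_pow_of_dvd (PowerSeries.X_dvd_iff.mpr (tSeries_constantCoeff A)) j) g
  exact PowerSeries.X_pow_dvd_iff.mp hX M h

lemma coeff_tpow_eq_zero (A : ℕ → ℤ_[p]) {j M : ℕ} (h : M < j) :
    PowerSeries.coeff M ((tSeries A) ^ j) = 0 := by
  have := coeff_tpow_mul_eq_zero A 1 h
  rwa [mul_one] at this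

lemma deriv_key (A : ℕ → ℤ_[p]) (k N : ℕ) (hk : 0 < k) (hN : 0 < N) :
    (k : ℤ_[p]) * PowerSeries.coeff (N - 1)
        ((tSeries A) ^ (k - 1) * d⁄dX ℤ_[p] (tSeries A))
      = (N : ℤ_[p]) * PowerSeries.coeff N ((tSeries A) ^ k) := by
  obtain ⟨M, rfl⟩ : ∃ M, N = M + 1 := ⟨N - 1, by omega⟩
  have hpow : d⁄dX ℤ_[p] ((tSeries A) ^ k) =
      k • ((tSeries A) ^ (k - 1) * d⁄dX ℤ_[p] (tSeries A)) := by
    rw [Derivation.leibniz_pow, smul_eq_mul]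
  have h1 := PowerSeries.coeff_derivative ((tSeries A) ^ k) M
  rw [hpow, map_nsmul, nsmul_eq_mul] at h1
  simp only [Nat.add_sub_cancel]
  rw [h1, mul_comm]
  norm_cast

/-- Reindexing lemma: a sum of terms supported on multiples of `d` can be reindexed. -/
lemma sum_reindex {G : Type*} [AddCommMonoid G] (f : ℕ → G) {d : ℕ} (hd : 0 < d) (N : ℕ)
    (hvanish : ∀ j, N < d * j → f j = 0) :
    ∑ k ∈ Finset.Icc 1 N, (if d ∣ k then f (k / d) else 0) = ∑ j ∈ Finset.Icc 1 N, f j := by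
  rw [← Finset.sum_filter]
  have h1 : ∑ k ∈ (Finset.Icc 1 N).filter (fun k => d ∣ k), f (k / d)
      = ∑ j ∈ Finset.Icc 1 (N / d), f j := by
    refine Finset.sum_nbij' (fun k => k / d) (fun j => d * j) ?_ ?_ ?_ ?_ ?_
    · intro k hk
      rw [Finset.mem_filter, Finset.mem_Icc] at hk
      obtain ⟨⟨hk1, hk2⟩, a, rfl⟩ := hk
      rw [Finset.mem_Icc, Nat.mul_div_cancel_left _ hd]
      constructor
      · rcases Nat.eq_zero_or_pos a with h0 | h0
        · subst h0; simp at hk1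
        · exact h0
      · exact Nat.le_div_iff_mul_le hd |>.mpr (by rw [Nat.mul_comm]; exact hk2)
    · intro j hj
      rw [Finset.mem_Icc] at hj
      rw [Finset.mem_filter, Finset.mem_Icc]
      have h2 : j * d ≤ N := (Nat.le_div_iff_mul_le hd).mp hj.2
      rw [Nat.mul_comm] at h2
      exact ⟨⟨Nat.mul_pos hd (by omega), h2⟩, ⟨j, rfl⟩⟩
    · intro k hk
      rw [Finset.mem_filter] at hk
      exact Nat.mul_div_cancel' hk.2
    · intro j hj
      exact Nat.mul_div_cancel_left _ hd
    · intro k hk; rfl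
  rw [h1]
  symm
  apply (Finset.sum_subset _ _).symm
  · intro j hj
    rw [Finset.mem_Icc] at hj ⊢
    exact ⟨hj.1, hj.2.trans (Nat.div_le_self N d)⟩
  · intro j hj hj'
    rw [Finset.mem_Icc] at hj hj'
    apply hvanish
    have h3 : N / d < j := by omega
    have := (Nat.div_lt_iff_lt_mul hd).mp h3
    rwa [Nat.mul_comm] at this
end Sums

section CSum

open PowerSeries

variable {p : ℕ} [Fact p.Prime]

lemma c_eq_sum (b A c : ℕ → ℤ_[p])
    (hsub : ∀ N : ℕ, c (N + 1) =
      PowerSeries.coeff N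
        ((∑ n ∈ Finset.range (N + 1), PowerSeries.C (b (n + 1)) * (tSeries A) ^ n)
          * PowerSeries.derivative ℤ_[p] (tSeries A)))
    {M N : ℕ} (hM : 0 < M) (hMN : M ≤ N) :
    c M = ∑ k ∈ Finset.Icc 1 N,
      b k * PowerSeries.coeff (M - 1)
        ((tSeries A) ^ (k - 1) * d⁄dX ℤ_[p] (tSeries A)) := by
  obtain ⟨M', rfl⟩ : ∃ M', M = M' + 1 := ⟨M - 1, by omega⟩
  have h0 : c (M' + 1) = ∑ n ∈ Finset.range (M' + 1),
      b (n + 1) * PowerSeries.coeff M'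
        ((tSeries A) ^ n * d⁄dX ℤ_[p] (tSeries A)) := by
    rw [hsub M', Finset.sum_mul, map_sum]
    refine Finset.sum_congr rfl fun n _ => ?_
    rw [mul_assoc, PowerSeries.coeff_C_mul]
  rw [h0]
  simp only [Nat.add_sub_cancel]
  rw [show ∑ k ∈ Finset.Icc 1 N,
      b k * PowerSeries.coeff M' ((tSeries A) ^ (k - 1) * d⁄dX ℤ_[p] (tSeries A))
      = ∑ k ∈ Finset.Icc 1 (M' + 1),
      b k * PowerSeries.coeff M' ((tSeries A) ^ (k - 1) * d⁄dX ℤ_[p] (tSeries A)) from ?_]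
  · rw [← Finset.Ico_add_one_right_eq_Icc, Finset.sum_Ico_eq_sum_range]
    try simp only [Nat.add_sub_cancel]
    refine Finset.sum_congr rfl fun n _ => ?_
    have h1 : 1 + n = n + 1 := by omega
    rw [h1]
    simp only [Nat.add_sub_cancel]
  · symm
    apply Finset.sum_subset
    · intro k hk
      rw [Finset.mem_Icc] at hk ⊢
      omega
    · intro k hk hk'
      rw [Finset.mem_Icc] at hk hk'
      rw [coeff_tpow_mul_eq_zero A _ (by omega : M' < k - 1), mul_zero]

end CSum

section KeyId

lemma key_identity {F : Type*} [Field F]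
    (pq kq Nq pe uinv Dq xD1 xD2 Tq Vq Wq Pq Qq bq bq' bq'' Bq Xq Yq αq βq β0q G1 F1 G2 F2 : F)
    (hk0 : kq ≠ 0) (hp0 : pq ≠ 0) (hpe0 : pe ≠ 0)
    (h1 : kq * Dq = Nq * Tq)
    (h2 : pq * kq * xD1 = Nq * Vq)
    (h3 : pq ^ 2 * kq * xD2 = Nq * Wq)
    (h4 : Pq - Vq = pe * pq * Xq)
    (h5 : Qq - Wq = pe * pq * Yq)
    (h6 : bq - αq * bq' + βq * bq'' = pe * Bq)
    (h7 : uinv * kq = pe)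
    (h8 : βq = pq * β0q)
    (hC1 : kq * G1 = Nq * bq' * Tq)
    (hC2 : pq * kq * F1 = Nq * bq * Pq)
    (hC3 : kq * G2 = Nq * bq'' * Tq)
    (hC4 : pq ^ 2 * kq * F2 = Nq * bq * Qq) :
    bq * Dq - αq * (bq * xD1) + βq * (bq * xD2)
      = Nq * uinv * (Bq * Tq + αq * bq * Xq - β0q * bq * Yq)
        + αq * (G1 - F1) - βq * (G2 - F2) := by
  apply mul_left_cancel₀
    (show pe * pq ^ 2 * kq ≠ 0 from
      mul_ne_zero (mul_ne_zero hpe0 (pow_ne_zero 2 hp0)) hk0)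
  linear_combination (pe * pq ^ 2 * bq) * h1 - (pe * αq * pq * bq) * h2 + (pe * βq * bq) * h3
    - (pq ^ 2 * Nq * pe * (Bq * Tq + αq * bq * Xq - β0q * bq * Yq)) * h7
    + (pq ^ 2 * Nq * pe * Tq) * h6 + (pq * Nq * pe * αq * bq) * h4
    - (pq * Nq * pe * β0q * bq) * h5 - (Nq * pe * bq * (Qq - Wq)) * h8
    - (pe * pq ^ 2 * αq) * hC1 + (pe * pq * αq) * hC2 + (pe * pq ^ 2 * βq) * hC3
    - (pe * βq) * hC4

end KeyId

section Bridge

open PowerSeries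

variable {p : ℕ} [Fact p.Prime]

lemma zF2 (A : ℕ → ℤ_[p]) (N k : ℕ) (hk : 0 < k) (hN : 0 < N) :
    (p : ℤ_[p]) * (k : ℤ_[p]) *
        (if p ∣ N then PowerSeries.coeff (N / p - 1)
            ((tSeries A) ^ (k - 1) * d⁄dX ℤ_[p] (tSeries A)) else 0)
      = (N : ℤ_[p]) * PowerSeries.coeff N (expandPS p ((tSeries A) ^ k)) := by
  have hp : 0 < p := (Fact.out : p.Prime).pos
  by_cases hpN : p ∣ N
  · obtain ⟨M, rfl⟩ := hpN
    have hM : 0 < M := by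
      rcases Nat.eq_zero_or_pos M with rfl | h
      · simp at hN
      · exact h
    rw [if_pos ⟨M, rfl⟩, coeff_expandPS, if_pos ⟨M, rfl⟩, Nat.mul_div_cancel_left _ hp]
    have h1 := deriv_key A k M hk hM
    push_cast
    linear_combination (p : ℤ_[p]) * h1
  · rw [if_neg hpN, coeff_expandPS, if_neg hpN, mul_zero, mul_zero]

lemma zF3 (A : ℕ → ℤ_[p]) (N k : ℕ) (hk : 0 < k) (hN : 0 < N) :
    (p : ℤ_[p]) ^ 2 * (k : ℤ_[p]) *
        (if p ^ 2 ∣ N then PowerSeries.coeff (N / p ^ 2 - 1)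
            ((tSeries A) ^ (k - 1) * d⁄dX ℤ_[p] (tSeries A)) else 0)
      = (N : ℤ_[p]) * PowerSeries.coeff N (expandPS p (expandPS p ((tSeries A) ^ k))) := by
  have hp : 0 < p := (Fact.out : p.Prime).pos
  by_cases hp2 : p ^ 2 ∣ N
  · obtain ⟨M, rfl⟩ := hp2
    have hM : 0 < M := by
      rcases Nat.eq_zero_or_pos M with rfl | h
      · simp at hN
      · exact h
    rw [if_pos ⟨M, rfl⟩, Nat.mul_div_cancel_left _ (pow_pos hp 2)]
    have e2 : PowerSeries.coeff (p ^ 2 * M)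
        (expandPS p (expandPS p ((tSeries A) ^ k)))
        = PowerSeries.coeff M ((tSeries A) ^ k) := by
      have ediv : p ^ 2 * M / p = p * M :=
        Nat.div_eq_of_eq_mul_left hp (by ring)
      rw [coeff_expandPS, if_pos ⟨p * M, by ring⟩, ediv, coeff_expandPS, if_pos ⟨M, rfl⟩,
        Nat.mul_div_cancel_left _ hp]
    rw [e2]
    have h1 := deriv_key A k M hk hM
    push_cast
    linear_combination ((p : ℤ_[p]) ^ 2) * h1
  · rw [if_neg hp2, mul_zero]
    have e0 : PowerSeries.coeff N (expandPS p (expandPS p ((tSeries A) ^ k))) = 0 := by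
      rw [coeff_expandPS]
      by_cases hpN : p ∣ N
      · have hnd : ¬ p ∣ N / p := by
          intro hc
          apply hp2
          obtain ⟨M, rfl⟩ := hpN
          rw [Nat.mul_div_cancel_left _ hp] at hc
          obtain ⟨M', rfl⟩ := hc
          exact ⟨M', by ring⟩
        rw [if_pos hpN, coeff_expandPS, if_neg hnd]
      · rw [if_neg hpN]
    rw [e0, mul_zero]

/-- The reindexing auxiliary function (the `α`-correction summand). -/
noncomputable def f1q (b A : ℕ → ℤ_[p]) (N j : ℕ) : ℚ_[p] :=
  (N : ℚ_[p]) * ((p : ℚ_[p]) * (j : ℚ_[p]))⁻¹ * ((b j : ℤ_[p]) : ℚ_[p]) *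
    ((PowerSeries.coeff N (((tSeries A) ^ j) ^ p) : ℤ_[p]) : ℚ_[p])

/-- The reindexing auxiliary function (the `β`-correction summand). -/
noncomputable def f2q (b A : ℕ → ℤ_[p]) (N j : ℕ) : ℚ_[p] :=
  (N : ℚ_[p]) * ((p : ℚ_[p]) ^ 2 * (j : ℚ_[p]))⁻¹ * ((b j : ℤ_[p]) : ℚ_[p]) *
    ((PowerSeries.coeff N (((tSeries A) ^ j) ^ (p ^ 2)) : ℤ_[p]) : ℚ_[p])

lemma qhelper {F : Type*} [Field F] (x y Nq bq Pq : F) (hx : x ≠ 0) (hy : y ≠ 0) :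
    x * y * (Nq * (x * y)⁻¹ * bq * Pq) = Nq * bq * Pq := by
  field_simp

lemma qC2 (b A : ℕ → ℤ_[p]) (N k : ℕ) (hk : 0 < k) :
    (p : ℚ_[p]) * (k : ℚ_[p]) * f1q b A N k
      = (N : ℚ_[p]) * ((b k : ℤ_[p]) : ℚ_[p]) *
          ((PowerSeries.coeff N (((tSeries A) ^ k) ^ p) : ℤ_[p]) : ℚ_[p]) := by
  have hp : 0 < p := (Fact.out : p.Prime).pos
  have hp0 : (p : ℚ_[p]) ≠ 0 := Nat.cast_ne_zero.mpr hp.ne'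
  have hk0 : (k : ℚ_[p]) ≠ 0 := Nat.cast_ne_zero.mpr hk.ne'
  rw [f1q]
  exact qhelper _ _ _ _ _ hp0 hk0

lemma qC4 (b A : ℕ → ℤ_[p]) (N k : ℕ) (hk : 0 < k) :
    (p : ℚ_[p]) ^ 2 * (k : ℚ_[p]) * f2q b A N k
      = (N : ℚ_[p]) * ((b k : ℤ_[p]) : ℚ_[p]) *
          ((PowerSeries.coeff N (((tSeries A) ^ k) ^ (p ^ 2)) : ℤ_[p]) : ℚ_[p]) := by
  have hp : 0 < p := (Fact.out : p.Prime).pos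
  have hp0 : ((p : ℚ_[p]) ^ 2) ≠ 0 := pow_ne_zero 2 (Nat.cast_ne_zero.mpr hp.ne')
  have hk0 : (k : ℚ_[p]) ≠ 0 := Nat.cast_ne_zero.mpr hk.ne'
  rw [f2q]
  exact qhelper _ _ _ _ _ hp0 hk0

lemma qC1 (b A : ℕ → ℤ_[p]) (N k : ℕ) (hk : 0 < k) :
    (k : ℚ_[p]) * (if p ∣ k then f1q b A N (k / p) else 0)
      = (N : ℚ_[p]) * (if p ∣ k then ((b (k / p) : ℤ_[p]) : ℚ_[p]) else 0) *
          ((PowerSeries.coeff N ((tSeries A) ^ k) : ℤ_[p]) : ℚ_[p]) := by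
  have hp : 0 < p := (Fact.out : p.Prime).pos
  have hp0 : (p : ℚ_[p]) ≠ 0 := Nat.cast_ne_zero.mpr hp.ne'
  by_cases hpk : p ∣ k
  · obtain ⟨j, rfl⟩ := hpk
    have hj : 0 < j := by
      rcases Nat.eq_zero_or_pos j with rfl | h
      · simp at hk
      · exact h
    have hj0 : (j : ℚ_[p]) ≠ 0 := Nat.cast_ne_zero.mpr hj.ne'
    rw [if_pos ⟨j, rfl⟩, if_pos ⟨j, rfl⟩, Nat.mul_div_cancel_left _ hp]
    have hTP : ((tSeries A) ^ j) ^ p = (tSeries A) ^ (p * j) := by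
      rw [← pow_mul, Nat.mul_comm]
    rw [f1q, hTP]
    push_cast
    field_simp
    try ring
  · rw [if_neg hpk, if_neg hpk, mul_zero, mul_zero, zero_mul]

lemma qC3 (b A : ℕ → ℤ_[p]) (N k : ℕ) (hk : 0 < k) :
    (k : ℚ_[p]) * (if p ^ 2 ∣ k then f2q b A N (k / p ^ 2) else 0)
      = (N : ℚ_[p]) * (if p ^ 2 ∣ k then ((b (k / p ^ 2) : ℤ_[p]) : ℚ_[p]) else 0) *
          ((PowerSeries.coeff N ((tSeries A) ^ k) : ℤ_[p]) : ℚ_[p]) := by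
  have hp : 0 < p := (Fact.out : p.Prime).pos
  have hp20 : ((p : ℚ_[p]) ^ 2) ≠ 0 := pow_ne_zero 2 (Nat.cast_ne_zero.mpr hp.ne')
  by_cases hpk : p ^ 2 ∣ k
  · obtain ⟨j, rfl⟩ := hpk
    have hj : 0 < j := by
      rcases Nat.eq_zero_or_pos j with rfl | h
      · simp at hk
      · exact h
    have hj0 : (j : ℚ_[p]) ≠ 0 := Nat.cast_ne_zero.mpr hj.ne'
    rw [if_pos ⟨j, rfl⟩, if_pos ⟨j, rfl⟩, Nat.mul_div_cancel_left _ (pow_pos hp 2)]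
    have hTP : ((tSeries A) ^ j) ^ (p ^ 2) = (tSeries A) ^ (p ^ 2 * j) := by
      rw [← pow_mul, Nat.mul_comm]
    rw [f2q, hTP]
    push_cast
    field_simp [show (p : ℚ_[p]) ≠ 0 from Nat.cast_ne_zero.mpr hp.ne']
    try ring
  · rw [if_neg hpk, if_neg hpk, mul_zero, mul_zero, zero_mul]

lemma vanish1 (b A : ℕ → ℤ_[p]) (N j : ℕ) (h : N < p * j) : f1q b A N j = 0 := by
  have hTP : ((tSeries A) ^ j) ^ p = (tSeries A) ^ (j * p) := by rw [← pow_mul]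
  rw [f1q, hTP, coeff_tpow_eq_zero A (by rw [Nat.mul_comm]; exact h : N < j * p)]
  push_cast
  ring

lemma vanish2 (b A : ℕ → ℤ_[p]) (N j : ℕ) (h : N < p ^ 2 * j) : f2q b A N j = 0 := by
  have hTP : ((tSeries A) ^ j) ^ (p ^ 2) = (tSeries A) ^ (j * p ^ 2) := by rw [← pow_mul]
  rw [f2q, hTP, coeff_tpow_eq_zero A (by rw [Nat.mul_comm]; exact h : N < j * p ^ 2)]
  push_cast
  ring

lemma padic_coe_sum (s : Finset ℕ) (f : ℕ → ℤ_[p]) :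
    ((∑ k ∈ s, f k : ℤ_[p]) : ℚ_[p]) = ∑ k ∈ s, ((f k : ℤ_[p]) : ℚ_[p]) :=
  map_sum (PadicInt.Coe.ringHom : ℤ_[p] →+* ℚ_[p]) f s

end Bridge

section MainDvd

open PowerSeries

variable {p : ℕ} [Fact p.Prime]

lemma main_dvd (b A c : ℕ → ℤ_[p]) (α β β₀ : ℤ_[p]) (hβ : β = (p : ℤ_[p]) * β₀)
    (hsub : ∀ N : ℕ, c (N + 1) =
      PowerSeries.coeff N
        ((∑ n ∈ Finset.range (N + 1), PowerSeries.C (b (n + 1)) * (tSeries A) ^ n)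
          * PowerSeries.derivative ℤ_[p] (tSeries A)))
    (HB : ∀ k : ℕ, 0 < k → (p : ℤ_[p]) ^ k.factorization p ∣ seqComb b α β k) :
    ∀ N : ℕ, 0 < N → (p : ℤ_[p]) ^ N.factorization p ∣ seqComb c α β N := by
  intro N hN
  have hpp : p.Prime := Fact.out
  have hp : 0 < p := hpp.pos
  have hp0 : (p : ℚ_[p]) ≠ 0 := Nat.cast_ne_zero.mpr hp.ne'
  set v := N.factorization p with hvdef
  have hNsplit : p ^ v * ordCompl[p] N = N := Nat.ordProj_mul_ordCompl_eq_self N p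
  have hNq : (p : ℚ_[p]) ^ v * ((ordCompl[p] N : ℕ) : ℚ_[p]) = (N : ℚ_[p]) := by
    exact_mod_cast congrArg (Nat.cast (R := ℚ_[p])) hNsplit
  -- choose the witnesses B, X, Y
  have hBex : ∀ k : ℕ, ∃ Bk : ℤ_[p],
      seqComb b α β k = (p : ℤ_[p]) ^ k.factorization p * Bk := by
    intro k
    rcases Nat.eq_zero_or_pos k with rfl | hk
    · exact ⟨seqComb b α β 0, by simp⟩
    · obtain ⟨Bk, hBk⟩ := HB k hk
      exact ⟨Bk, hBk⟩
  choose B hB using hBex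
  have hXex : ∀ k : ℕ, ∃ Xk : ℤ_[p],
      PowerSeries.coeff N (((tSeries A) ^ k) ^ p)
          - PowerSeries.coeff N (expandPS p ((tSeries A) ^ k))
        = (p : ℤ_[p]) ^ (k.factorization p + 1) * Xk := by
    intro k
    obtain ⟨w, hw⟩ := coeff_dvd_of_dvd_series (D1 (tSeries A) k) N
    exact ⟨w, by rw [← map_sub]; exact hw⟩
  choose X hX using hXex
  have hYex : ∀ k : ℕ, ∃ Yk : ℤ_[p],
      PowerSeries.coeff N (((tSeries A) ^ k) ^ (p ^ 2))
          - PowerSeries.coeff N (expandPS p (expandPS p ((tSeries A) ^ k)))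
        = (p : ℤ_[p]) ^ (k.factorization p + 1) * Yk := by
    intro k
    obtain ⟨w, hw⟩ := coeff_dvd_of_dvd_series (D2 (tSeries A) k) N
    exact ⟨w, by rw [← map_sub]; exact hw⟩
  choose Y hY using hYex
  have hunit : ∀ k : ℕ, 0 < k → IsUnit ((ordCompl[p] k : ℕ) : ℤ_[p]) := fun k hk =>
    PadicInt.isUnit_natCast_of_not_dvd (Nat.not_dvd_ordCompl hpp hk.ne')
  set υ : ℕ → ℤ_[p]ˣ := fun k => if h : 0 < k then (hunit k h).unit else 1 with hυdef
  have hυc : ∀ k : ℕ, 0 < k → ((υ k : ℤ_[p]ˣ) : ℤ_[p]) = ((ordCompl[p] k : ℕ) : ℤ_[p]) := by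
    intro k hk
    simp only [hυdef, dif_pos hk]
    exact (hunit k hk).unit_spec
  refine ⟨((ordCompl[p] N : ℕ) : ℤ_[p]) * ∑ k ∈ Finset.Icc 1 N,
      (((υ k)⁻¹ : ℤ_[p]ˣ) : ℤ_[p]) *
        (B k * PowerSeries.coeff N ((tSeries A) ^ k)
          + α * b k * X k - β₀ * b k * Y k), ?_⟩
  -- expand seqComb c α β N as a single sum
  have hcN : c N = ∑ k ∈ Finset.Icc 1 N, b k *
      PowerSeries.coeff (N - 1) ((tSeries A) ^ (k - 1) * d⁄dX ℤ_[p] (tSeries A)) :=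
    c_eq_sum b A c hsub hN le_rfl
  have hcNp : (if p ∣ N then c (N / p) else 0) = ∑ k ∈ Finset.Icc 1 N, b k *
      (if p ∣ N then PowerSeries.coeff (N / p - 1)
        ((tSeries A) ^ (k - 1) * d⁄dX ℤ_[p] (tSeries A)) else 0) := by
    by_cases hpN : p ∣ N
    · simp only [if_pos hpN]
      exact c_eq_sum b A c hsub (Nat.div_pos (Nat.le_of_dvd hN hpN) hp) (Nat.div_le_self N p)
    · simp only [if_neg hpN, mul_zero, Finset.sum_const_zero]
  have hcNpp : (if p ^ 2 ∣ N then c (N / p ^ 2) else 0) = ∑ k ∈ Finset.Icc 1 N, b k *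
      (if p ^ 2 ∣ N then PowerSeries.coeff (N / p ^ 2 - 1)
        ((tSeries A) ^ (k - 1) * d⁄dX ℤ_[p] (tSeries A)) else 0) := by
    by_cases hpN : p ^ 2 ∣ N
    · simp only [if_pos hpN]
      exact c_eq_sum b A c hsub (Nat.div_pos (Nat.le_of_dvd hN hpN) (pow_pos hp 2))
        (Nat.div_le_self N (p ^ 2))
    · simp only [if_neg hpN, mul_zero, Finset.sum_const_zero]
  have hseq : seqComb c α β N = ∑ k ∈ Finset.Icc 1 N,
      (b k * PowerSeries.coeff (N - 1)
          ((tSeries A) ^ (k - 1) * d⁄dX ℤ_[p] (tSeries A))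
        - α * (b k * (if p ∣ N then PowerSeries.coeff (N / p - 1)
            ((tSeries A) ^ (k - 1) * d⁄dX ℤ_[p] (tSeries A)) else 0))
        + β * (b k * (if p ^ 2 ∣ N then PowerSeries.coeff (N / p ^ 2 - 1)
            ((tSeries A) ^ (k - 1) * d⁄dX ℤ_[p] (tSeries A)) else 0))) := by
    simp only [seqComb]
    rw [hcN, hcNp, hcNpp, Finset.mul_sum, Finset.mul_sum, ← Finset.sum_sub_distrib,
      ← Finset.sum_add_distrib]
  have hinj : Function.Injective ((↑) : ℤ_[p] → ℚ_[p]) := Subtype.coe_injective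
  apply hinj
  rw [hseq]
  rw [show ((∑ k ∈ Finset.Icc 1 N,
      (b k * PowerSeries.coeff (N - 1)
          ((tSeries A) ^ (k - 1) * d⁄dX ℤ_[p] (tSeries A))
        - α * (b k * (if p ∣ N then PowerSeries.coeff (N / p - 1)
            ((tSeries A) ^ (k - 1) * d⁄dX ℤ_[p] (tSeries A)) else 0))
        + β * (b k * (if p ^ 2 ∣ N then PowerSeries.coeff (N / p ^ 2 - 1)
            ((tSeries A) ^ (k - 1) * d⁄dX ℤ_[p] (tSeries A)) else 0))) : ℤ_[p]) : ℚ_[p])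
      = ∑ k ∈ Finset.Icc 1 N, ((b k * PowerSeries.coeff (N - 1)
          ((tSeries A) ^ (k - 1) * d⁄dX ℤ_[p] (tSeries A))
        - α * (b k * (if p ∣ N then PowerSeries.coeff (N / p - 1)
            ((tSeries A) ^ (k - 1) * d⁄dX ℤ_[p] (tSeries A)) else 0))
        + β * (b k * (if p ^ 2 ∣ N then PowerSeries.coeff (N / p ^ 2 - 1)
            ((tSeries A) ^ (k - 1) * d⁄dX ℤ_[p] (tSeries A)) else 0)) : ℤ_[p]) : ℚ_[p])
    from map_sum (PadicInt.Coe.ringHom : ℤ_[p] →+* ℚ_[p]) _ _]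
  -- the key per-term identity
  have key : ∀ k ∈ Finset.Icc 1 N,
      ((b k * PowerSeries.coeff (N - 1)
          ((tSeries A) ^ (k - 1) * d⁄dX ℤ_[p] (tSeries A))
        - α * (b k * (if p ∣ N then PowerSeries.coeff (N / p - 1)
            ((tSeries A) ^ (k - 1) * d⁄dX ℤ_[p] (tSeries A)) else 0))
        + β * (b k * (if p ^ 2 ∣ N then PowerSeries.coeff (N / p ^ 2 - 1)
            ((tSeries A) ^ (k - 1) * d⁄dX ℤ_[p] (tSeries A)) else 0)) : ℤ_[p]) : ℚ_[p])
      = (N : ℚ_[p]) * ((((υ k)⁻¹ : ℤ_[p]ˣ) : ℤ_[p]) : ℚ_[p]) *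
          (((B k : ℤ_[p]) : ℚ_[p]) *
              ((PowerSeries.coeff N ((tSeries A) ^ k) : ℤ_[p]) : ℚ_[p])
            + ((α : ℤ_[p]) : ℚ_[p]) * ((b k : ℤ_[p]) : ℚ_[p]) * ((X k : ℤ_[p]) : ℚ_[p])
            - ((β₀ : ℤ_[p]) : ℚ_[p]) * ((b k : ℤ_[p]) : ℚ_[p]) * ((Y k : ℤ_[p]) : ℚ_[p]))
        + ((α : ℤ_[p]) : ℚ_[p]) *
            ((if p ∣ k then f1q b A N (k / p) else 0) - f1q b A N k)
        - ((β : ℤ_[p]) : ℚ_[p]) *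
            ((if p ^ 2 ∣ k then f2q b A N (k / p ^ 2) else 0) - f2q b A N k) := by
    intro k hkmem
    have hk : 0 < k := by
      rw [Finset.mem_Icc] at hkmem; omega
    have hk0 : (k : ℚ_[p]) ≠ 0 := Nat.cast_ne_zero.mpr hk.ne'
    have hpe0 : ((p : ℚ_[p]) ^ k.factorization p) ≠ 0 := pow_ne_zero _ hp0
    -- coerced multiplicative facts
    have q1 := congrArg (fun x : ℤ_[p] => (x : ℚ_[p])) (deriv_key A k N hk hN)
    push_cast at q1
    have q2 := congrArg (fun x : ℤ_[p] => (x : ℚ_[p])) (zF2 A N k hk hN)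
    push_cast [apply_ite ((↑) : ℤ_[p] → ℚ_[p])] at q2
    have q3 := congrArg (fun x : ℤ_[p] => (x : ℚ_[p])) (zF3 A N k hk hN)
    push_cast [apply_ite ((↑) : ℤ_[p] → ℚ_[p])] at q3
    have z4 := hX k
    rw [show (p : ℤ_[p]) ^ (k.factorization p + 1)
        = (p : ℤ_[p]) ^ k.factorization p * (p : ℤ_[p]) from pow_succ _ _] at z4
    have q4 := congrArg (fun x : ℤ_[p] => (x : ℚ_[p])) z4
    push_cast at q4
    have z5 := hY k
    rw [show (p : ℤ_[p]) ^ (k.factorization p + 1)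
        = (p : ℤ_[p]) ^ k.factorization p * (p : ℤ_[p]) from pow_succ _ _] at z5
    have q5 := congrArg (fun x : ℤ_[p] => (x : ℚ_[p])) z5
    push_cast at q5
    have z6 := hB k
    simp only [seqComb] at z6
    have q6 := congrArg (fun x : ℤ_[p] => (x : ℚ_[p])) z6
    push_cast [apply_ite ((↑) : ℤ_[p] → ℚ_[p])] at q6
    have hui : (((υ k)⁻¹ : ℤ_[p]ˣ) : ℤ_[p]) * ((ordCompl[p] k : ℕ) : ℤ_[p]) = 1 := by
      rw [← hυc k hk]
      exact Units.inv_mul (υ k)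
    have hord : (p : ℤ_[p]) ^ k.factorization p * ((ordCompl[p] k : ℕ) : ℤ_[p])
        = (k : ℤ_[p]) := by
      exact_mod_cast congrArg (Nat.cast (R := ℤ_[p])) (Nat.ordProj_mul_ordCompl_eq_self k p)
    have qa := congrArg (fun x : ℤ_[p] => (x : ℚ_[p])) hui
    push_cast at qa
    have qb := congrArg (fun x : ℤ_[p] => (x : ℚ_[p])) hord
    push_cast at qb
    have q7 : ((((υ k)⁻¹ : ℤ_[p]ˣ) : ℤ_[p]) : ℚ_[p]) * (k : ℚ_[p])
        = (p : ℚ_[p]) ^ k.factorization p := by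
      linear_combination ((p : ℚ_[p]) ^ k.factorization p) * qa
        - ((((υ k)⁻¹ : ℤ_[p]ˣ) : ℤ_[p]) : ℚ_[p]) * qb
    have q8 := congrArg (fun x : ℤ_[p] => (x : ℚ_[p])) hβ
    push_cast at q8
    have qc1 := qC1 b A N k hk
    have qc2 := qC2 b A N k hk
    have qc3 := qC3 b A N k hk
    have qc4 := qC4 b A N k hk
    push_cast [apply_ite ((↑) : ℤ_[p] → ℚ_[p])]
    rw [show (if p ∣ k then ((b (k / p) : ℤ_[p]) : ℚ_[p]) else 0)
        = ((if p ∣ k then b (k / p) else 0 : ℤ_[p]) : ℚ_[p]) by split_ifs <;> simp] at qc1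
    rw [show (if p ^ 2 ∣ k then ((b (k / p ^ 2) : ℤ_[p]) : ℚ_[p]) else 0)
        = ((if p ^ 2 ∣ k then b (k / p ^ 2) else 0 : ℤ_[p]) : ℚ_[p]) by split_ifs <;> simp] at qc3
    exact key_identity _ _ _ _ _ _ _ _ _ _ _ _ _ _ _ _ _ _ _ _ _ _ _ _ _ _
      hk0 hp0 hpe0 q1 q2 q3 q4 q5 q6 q7 q8 qc1 qc2 qc3 qc4
  rw [Finset.sum_congr rfl key]
  -- split the sum and kill the two correction sums by reindexing
  rw [Finset.sum_sub_distrib, Finset.sum_add_distrib, ← Finset.mul_sum, ← Finset.mul_sum]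
  have hcorr1 : (∑ k ∈ Finset.Icc 1 N,
      ((if p ∣ k then f1q b A N (k / p) else 0) - f1q b A N k)) = 0 := by
    rw [Finset.sum_sub_distrib,
      sum_reindex (f1q b A N) hp N (fun j hj => vanish1 b A N j hj), sub_self]
  have hcorr2 : (∑ k ∈ Finset.Icc 1 N,
      ((if p ^ 2 ∣ k then f2q b A N (k / p ^ 2) else 0) - f2q b A N k)) = 0 := by
    rw [Finset.sum_sub_distrib,
      sum_reindex (f2q b A N) (pow_pos hp 2) N (fun j hj => vanish2 b A N j hj), sub_self]
  rw [hcorr1, hcorr2, mul_zero, mul_zero, sub_zero, add_zero]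
  -- final accounting
  rw [show (((p : ℤ_[p]) ^ v * (((ordCompl[p] N : ℕ) : ℤ_[p]) * ∑ k ∈ Finset.Icc 1 N,
      (((υ k)⁻¹ : ℤ_[p]ˣ) : ℤ_[p]) *
        (B k * PowerSeries.coeff N ((tSeries A) ^ k)
          + α * b k * X k - β₀ * b k * Y k)) : ℤ_[p]) : ℚ_[p])
      = (p : ℚ_[p]) ^ v * (((ordCompl[p] N : ℕ) : ℚ_[p]) * ∑ k ∈ Finset.Icc 1 N,
        (((((υ k)⁻¹ : ℤ_[p]ˣ) : ℤ_[p]) *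
          (B k * PowerSeries.coeff N ((tSeries A) ^ k)
            + α * b k * X k - β₀ * b k * Y k) : ℤ_[p]) : ℚ_[p]))
    from by
      rw [PadicInt.coe_mul, PadicInt.coe_mul, PadicInt.coe_pow, PadicInt.coe_natCast,
        PadicInt.coe_natCast, padic_coe_sum]]
  rw [Finset.mul_sum, Finset.mul_sum]
  refine Finset.sum_congr rfl fun k _ => ?_
  push_cast
  rw [← hNq]
  ring

end MainDvd

/-- Beukers' proposition: if `ω(t) = (∑ b_n t^{n-1}) dt`, `t(q) = ∑ A_n qⁿ` and
`ω(t(q)) = (∑ c_n q^{n-1}) dq`, then three-term congruences mod `p^r` for the `b`'s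
imply the corresponding congruences for the `c`'s.  The substitution hypothesis `hsub`
says that `c_{N+1}` is the `N`-th coefficient of `(∑_{n≥1} b_n t(q)^{n-1}) · t'(q)`
(only the terms with `n - 1 ≤ N` contribute, since `t(q)` has zero constant term). -/
theorem beukers_congruence_transfer (p : ℕ) [Fact p.Prime]
    (b A c : ℕ → ℤ_[p]) (α β : ℤ_[p]) (hβ : (p : ℤ_[p]) ∣ β)
    (hsub : ∀ N : ℕ, c (N + 1) =
      PowerSeries.coeff N
        ((∑ n ∈ Finset.range (N + 1), PowerSeries.C (b (n + 1)) * (tSeries A) ^ n)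
          * PowerSeries.derivative ℤ_[p] (tSeries A)))
    (hb : ∀ m r : ℕ, 0 < m → 0 < r →
      (p : ℤ_[p]) ^ r ∣
        extSeq b ((m : ℚ) * (p : ℚ) ^ (r : ℤ))
          - α * extSeq b ((m : ℚ) * (p : ℚ) ^ ((r : ℤ) - 1))
          + β * extSeq b ((m : ℚ) * (p : ℚ) ^ ((r : ℤ) - 2))) :
    ∀ m r : ℕ, 0 < m → 0 < r →
      (p : ℤ_[p]) ^ r ∣
        extSeq c ((m : ℚ) * (p : ℚ) ^ (r : ℤ))
          - α * extSeq c ((m : ℚ) * (p : ℚ) ^ ((r : ℤ) - 1))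
          + β * extSeq c ((m : ℚ) * (p : ℚ) ^ ((r : ℤ) - 2)) := by
  have hpp : p.Prime := Fact.out
  have hp : 0 < p := hpp.pos
  have HB : ∀ k : ℕ, 0 < k → (p : ℤ_[p]) ^ k.factorization p ∣ seqComb b α β k := by
    intro k hk
    rcases Nat.eq_zero_or_pos (k.factorization p) with he0 | hepos
    · rw [he0, pow_zero]
      exact one_dvd _
    · have hm : 0 < ordCompl[p] k := Nat.ordCompl_pos p hk.ne'
      have h := hb (ordCompl[p] k) (k.factorization p) hm hepos
      rw [extSeq_comb b α β _ _ hm hepos] at h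
      rwa [show ordCompl[p] k * p ^ k.factorization p = k from by
        rw [Nat.mul_comm]; exact Nat.ordProj_mul_ordCompl_eq_self k p] at h
  obtain ⟨β₀, hβ₀⟩ := hβ
  have main := main_dvd b A c α β β₀ hβ₀ hsub HB
  intro m r hm hr
  rw [extSeq_comb c α β m r hm hr]
  have hN : 0 < m * p ^ r := Nat.mul_pos hm (pow_pos hp r)
  refine dvd_trans (pow_dvd_pow _ ?_) (main (m * p ^ r) hN)
  exact (Nat.Prime.pow_dvd_iff_le_factorization hpp hN.ne').mp (dvd_mul_left (p ^ r) m)
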